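/- Let M ∈ ℝ and assume that 2M·I − (γ/h) ∑_{j=1}^J [L_j, L_jᴴ] is positive semidefinite. Then for every t ≥ 0 and every A ∈ M_d(ℂ): ‖exp(tℒ)(A)‖ ≤ e^{Mt} ‖A‖, where exp(tℒ) denotes the exponential of the linear operator tℒ acting on M_d(ℂ). -/

import Mathlib

set_option maxHeartbeats 1000000

open Matrix
open scoped BigOperators ComplexOrder

attribute [local instance] Matrix.frobeniusNormedAddCommGroup Matrix.frobeniusNormedSpace

/-- The Lindbladian `ℒA = (i/h)[P,A] + (γ/h) ∑ⱼ (LⱼALⱼᴴ − ½(LⱼᴴLⱼA + ALⱼᴴLⱼ))`. -/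
noncomputable def Lindbladian {d J : ℕ} (h γ : ℝ) (P : Matrix (Fin d) (Fin d) ℂ)
    (L : Fin J → Matrix (Fin d) (Fin d) ℂ) (A : Matrix (Fin d) (Fin d) ℂ) :
    Matrix (Fin d) (Fin d) ℂ :=
  (Complex.I / (h : ℂ)) • (P * A - A * P)
    + ((γ / h : ℝ) : ℂ) • ∑ j, (L j * A * (L j)ᴴ
        - (1 / 2 : ℂ) • ((L j)ᴴ * L j * A + A * ((L j)ᴴ * L j)))

/-- The adjoint Lindbladian
`ℒ*B = −(i/h)[P,B] + (γ/h) ∑ⱼ (LⱼᴴBLⱼ − ½(LⱼᴴLⱼB + BLⱼᴴLⱼ))`. -/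
noncomputable def LindbladianAdj {d J : ℕ} (h γ : ℝ) (P : Matrix (Fin d) (Fin d) ℂ)
    (L : Fin J → Matrix (Fin d) (Fin d) ℂ) (B : Matrix (Fin d) (Fin d) ℂ) :
    Matrix (Fin d) (Fin d) ℂ :=
  -(Complex.I / (h : ℂ)) • (P * B - B * P)
    + ((γ / h : ℝ) : ℂ) • ∑ j, ((L j)ᴴ * B * L j
        - (1 / 2 : ℂ) • ((L j)ᴴ * L j * B + B * ((L j)ᴴ * L j)))


/-- The Hilbert–Schmidt norm `‖A‖ = (tr(AAᴴ))^{1/2}`. -/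
noncomputable def hsNorm {d : ℕ} (A : Matrix (Fin d) (Fin d) ℂ) : ℝ :=
  Real.sqrt (((A * Aᴴ).trace).re)

lemma psd_trace_re_nonneg {d : ℕ} {N : Matrix (Fin d) (Fin d) ℂ} (hN : N.PosSemidef) :
    0 ≤ N.trace.re := by
  have h1 : ∀ i, 0 ≤ (N i i).re := by
    intro i
    have := hN.diag_nonneg (i := i)
    exact (Complex.le_def.mp this).1
  rw [Matrix.trace, Complex.re_sum]
  exact Finset.sum_nonneg fun i _ => h1 i

lemma tc4 {d : ℕ} (A B C D : Matrix (Fin d) (Fin d) ℂ) :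
    (A * B * C * D).trace = (D * A * B * C).trace := by
  rw [Matrix.trace_mul_comm, ← Matrix.mul_assoc, ← Matrix.mul_assoc]

lemma cs_trace {d : ℕ} (X Y : Matrix (Fin d) (Fin d) ℂ) :
    ((X * Yᴴ).trace).re ≤ (1/2) * (((X * Xᴴ).trace).re + ((Y * Yᴴ).trace).re) := by
  have h0 : 0 ≤ (((X - Y) * (X - Y)ᴴ).trace).re :=
    psd_trace_re_nonneg (Matrix.posSemidef_self_mul_conjTranspose _)
  have hYX : ((Y * Xᴴ).trace).re = ((X * Yᴴ).trace).re := by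
    have h2 : (Y * Xᴴ) = (X * Yᴴ)ᴴ := by simp
    rw [h2, Matrix.trace_conjTranspose]
    simp [Complex.star_def]
  have hexp : ((X - Y) * (X - Y)ᴴ).trace
      = (X * Xᴴ).trace - (X * Yᴴ).trace - (Y * Xᴴ).trace + (Y * Yᴴ).trace := by
    simp [Matrix.conjTranspose_sub, Matrix.mul_sub, Matrix.sub_mul, Matrix.trace_sub,
      Matrix.trace_add]
    ring
  rw [hexp] at h0
  simp only [Complex.add_re, Complex.sub_re] at h0
  rw [hYX] at h0
  linarith

/-- The key dissipativity estimate: `2 Re tr(ℒ(B) Bᴴ) ≤ 2M Re tr(B Bᴴ)`. -/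
lemma key_ineq {d J : ℕ} (h γ : ℝ) (hh : 0 < h) (hγ : 0 ≤ γ)
    (P : Matrix (Fin d) (Fin d) ℂ) (hP : P.IsHermitian)
    (L : Fin J → Matrix (Fin d) (Fin d) ℂ) (M : ℝ)
    (hM : (((2 * M : ℝ) : ℂ) • (1 : Matrix (Fin d) (Fin d) ℂ)
        - ((γ / h : ℝ) : ℂ) • ∑ j, (L j * (L j)ᴴ - (L j)ᴴ * L j)).PosSemidef)
    (B : Matrix (Fin d) (Fin d) ℂ) :
    2 * ((Lindbladian h γ P L B * Bᴴ).trace).re ≤ 2 * M * ((B * Bᴴ).trace).re := by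
  set c : ℝ := γ / h with hc_def
  have hc : 0 ≤ c := div_nonneg hγ hh.le
  set S : Matrix (Fin d) (Fin d) ℂ := ∑ j, (L j * (L j)ᴴ - (L j)ᴴ * L j) with hS_def
  set z : ℂ := ((P * B - B * P) * Bᴴ).trace with hz_def
  set w : Fin J → ℂ := fun j => ((L j * B * (L j)ᴴ
      - (1 / 2 : ℂ) • ((L j)ᴴ * L j * B + B * ((L j)ᴴ * L j))) * Bᴴ).trace with hw_def
  have h1 : (Lindbladian h γ P L B * Bᴴ).trace
      = (Complex.I / (h : ℂ)) * z + ((c : ℝ) : ℂ) * ∑ j, w j := by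
    rw [Lindbladian, Matrix.add_mul, Matrix.trace_add, smul_mul_assoc, Matrix.trace_smul,
      smul_mul_assoc, Matrix.trace_smul, Finset.sum_mul, Matrix.trace_sum]
    simp only [smul_eq_mul, hw_def, hc_def, hz_def, Complex.ofReal_div]
  -- Hamiltonian part has zero real part
  have hzim : z.im = 0 := by
    have hstar : (starRingEnd ℂ) z = z := by
      rw [hz_def, ← Complex.star_def, ← Matrix.trace_conjTranspose]
      have h2 : ((P * B - B * P) * Bᴴ)ᴴ = B * (Bᴴ * P - P * Bᴴ) := by
        simp [Matrix.conjTranspose_sub, Matrix.conjTranspose_mul, hP.eq, Matrix.mul_sub,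
          Matrix.sub_mul, Matrix.mul_assoc]
      rw [h2, Matrix.mul_sub, Matrix.trace_sub, Matrix.sub_mul, Matrix.trace_sub]
      congr 1
      · rw [← Matrix.mul_assoc, Matrix.trace_mul_cycle]
      · rw [← Matrix.mul_assoc]
    exact Complex.conj_eq_iff_im.mp hstar
  have hham : ((Complex.I / (h : ℂ)) * z).re = 0 := by
    rw [Complex.mul_re]
    have h1' : (Complex.I / (h : ℂ)).re = 0 := by
      rw [Complex.div_re]; simp
    rw [h1', hzim]; ring
  -- per-j bound
  have hwj : ∀ j, (w j).re ≤ (1/2) * (((L j * (L j)ᴴ - (L j)ᴴ * L j) * (Bᴴ * B)).trace).re := by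
    intro j
    set Lj := L j with hLj
    have hexp : w j = ((Lj * B * Ljᴴ) * Bᴴ).trace
        - (1/2 : ℂ) * ((Ljᴴ * Lj * B) * Bᴴ).trace - (1/2 : ℂ) * ((B * (Ljᴴ * Lj)) * Bᴴ).trace := by
      simp [hw_def, Matrix.sub_mul, Matrix.add_mul, smul_mul_assoc, Matrix.trace_sub,
        Matrix.trace_add, Matrix.trace_smul, smul_eq_mul]
      ring
    have hcs := cs_trace (Lj * B) (B * Lj)
    have e1 : ((Lj * B) * (B * Lj)ᴴ).trace = ((Lj * B * Ljᴴ) * Bᴴ).trace := by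
      rw [Matrix.conjTranspose_mul, ← Matrix.mul_assoc]
    have e2 : ((Lj * B) * (Lj * B)ᴴ).trace = ((Ljᴴ * Lj * B) * Bᴴ).trace := by
      rw [Matrix.conjTranspose_mul, ← Matrix.mul_assoc, tc4]
    have e3 : ((B * Lj) * (B * Lj)ᴴ).trace = ((Lj * Ljᴴ) * (Bᴴ * B)).trace := by
      rw [Matrix.conjTranspose_mul, ← Matrix.mul_assoc, tc4,
        Matrix.trace_mul_comm (Lj * Ljᴴ) (Bᴴ * B), ← Matrix.mul_assoc]
    have e4 : ((B * (Ljᴴ * Lj)) * Bᴴ).trace = ((Ljᴴ * Lj) * (Bᴴ * B)).trace := by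
      rw [← Matrix.mul_assoc, tc4, Matrix.trace_mul_comm (Ljᴴ * Lj) (Bᴴ * B), ← Matrix.mul_assoc]
    have e5 : ((Ljᴴ * Lj * B) * Bᴴ).trace = ((Ljᴴ * Lj) * (B * Bᴴ)).trace := by
      rw [Matrix.mul_assoc (Ljᴴ * Lj) B Bᴴ]
    rw [e1, e2, e3, e5] at hcs
    have hfinal : ((Lj * Ljᴴ - Ljᴴ * Lj) * (Bᴴ * B)).trace
        = ((Lj * Ljᴴ) * (Bᴴ * B)).trace - ((Ljᴴ * Lj) * (Bᴴ * B)).trace := by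
      rw [Matrix.sub_mul, Matrix.trace_sub]
    rw [hexp, hfinal]
    simp only [Complex.sub_re, Complex.mul_re]
    have hhalf : ((1:ℂ)/2).re = 1/2 := by norm_num
    have hhalfim : ((1:ℂ)/2).im = 0 := by norm_num
    rw [hhalf, hhalfim, e4, e5]
    simp only [zero_mul, sub_zero]
    linarith [hcs]
  have hsum : ∑ j, (w j).re ≤ (1/2) * ((S * (Bᴴ * B)).trace).re := by
    have h2 : (S * (Bᴴ * B)).trace = ∑ j, ((L j * (L j)ᴴ - (L j)ᴴ * L j) * (Bᴴ * B)).trace := by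
      rw [hS_def, Finset.sum_mul, Matrix.trace_sum]
    rw [h2, Complex.re_sum, Finset.mul_sum]
    exact Finset.sum_le_sum fun j _ => hwj j
  have hpsd : 0 ≤ ((B * (((2 * M : ℝ) : ℂ) • 1 - ((c : ℝ) : ℂ) • S) * Bᴴ)).trace.re :=
    psd_trace_re_nonneg (hM.mul_mul_conjTranspose_same B)
  have htr : (B * (((2 * M : ℝ) : ℂ) • 1 - ((c : ℝ) : ℂ) • S) * Bᴴ).trace
      = ((2 * M : ℝ) : ℂ) * (Bᴴ * B).trace - ((c : ℝ) : ℂ) * (S * (Bᴴ * B)).trace := by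
    rw [Matrix.trace_mul_cycle, Matrix.trace_mul_comm (Bᴴ * B)]
    rw [Matrix.sub_mul, smul_mul_assoc, smul_mul_assoc, Matrix.one_mul, Matrix.trace_sub,
      Matrix.trace_smul, Matrix.trace_smul, smul_eq_mul, smul_eq_mul]
  rw [htr] at hpsd
  simp only [Complex.sub_re, Complex.re_ofReal_mul] at hpsd
  have hBB : ((Bᴴ * B).trace).re = ((B * Bᴴ).trace).re := by rw [Matrix.trace_mul_comm]
  rw [hBB] at hpsd
  rw [h1, Complex.add_re, hham, Complex.re_ofReal_mul, Complex.re_sum, zero_add]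
  have h3 : (2 : ℝ) * (c * ∑ j, (w j).re) ≤ 2 * (c * ((1/2) * ((S * (Bᴴ * B)).trace).re)) := by
    have := mul_le_mul_of_nonneg_left hsum hc
    linarith
  linarith

noncomputable def entryCLM (d : ℕ) (i j : Fin d) : Matrix (Fin d) (Fin d) ℂ →L[ℂ] ℂ :=
  LinearMap.toContinuousLinearMap
    { toFun := fun X => X i j
      map_add' := fun _ _ => rfl
      map_smul' := fun _ _ => rfl }

@[simp] lemma entryCLM_apply {d : ℕ} (i j : Fin d) (X : Matrix (Fin d) (Fin d) ℂ) :
    entryCLM d i j X = X i j := rfl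

lemma hasDerivAt_normSq {f : ℝ → ℂ} {f' : ℂ} {s : ℝ} (hf : HasDerivAt f f' s) :
    HasDerivAt (fun u => Complex.normSq (f u)) (2 * (f' * (starRingEnd ℂ) (f s)).re) s := by
  have hre : HasDerivAt (fun u => (f u).re) f'.re s :=
    (Complex.reCLM.hasFDerivAt.comp_hasDerivAt s hf)
  have him : HasDerivAt (fun u => (f u).im) f'.im s :=
    (Complex.imCLM.hasFDerivAt.comp_hasDerivAt s hf)
  have h1 : HasDerivAt (fun u => (f u).re * (f u).re + (f u).im * (f u).im)
      (f'.re * (f s).re + (f s).re * f'.re + (f'.im * (f s).im + (f s).im * f'.im)) s :=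
    (hre.mul hre).add (him.mul him)
  have heq : (fun u => Complex.normSq (f u))
      = fun u => (f u).re * (f u).re + (f u).im * (f u).im := by
    funext u; simp [Complex.normSq_apply]
  have hval : 2 * (f' * (starRingEnd ℂ) (f s)).re
      = f'.re * (f s).re + (f s).re * f'.re + (f'.im * (f s).im + (f s).im * f'.im) := by
    simp [Complex.mul_re, Complex.conj_re, Complex.conj_im]; ring
  rw [heq, hval]; exact h1

lemma hasDerivAt_orbit {d : ℕ} (T : @ContinuousLinearMap ℂ ℂ _ _ (RingHom.id ℂ)
      (Matrix (Fin d) (Fin d) ℂ) PseudoMetricSpace.toUniformSpace.toTopologicalSpace _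
      (Matrix (Fin d) (Fin d) ℂ) PseudoMetricSpace.toUniformSpace.toTopologicalSpace _ _ _)
    (A : Matrix (Fin d) (Fin d) ℂ) (s : ℝ) :
    HasDerivAt (fun u : ℝ => NormedSpace.exp ((u : ℂ) • T) A)
      (T (NormedSpace.exp ((s : ℂ) • T) A)) s := by
  have h1 : HasDerivAt (fun u : ℝ => NormedSpace.exp ((u : ℂ) • T))
      (T * NormedSpace.exp ((s : ℂ) • T)) s := by
    have ha := hasDerivAt_exp_smul_const' T (s : ℂ)
    have hb : HasDerivAt (fun u : ℝ => (u : ℂ)) 1 s := Complex.ofRealCLM.hasDerivAt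
    have h1' : HasDerivAt (fun u : ℝ => NormedSpace.exp ((u : ℂ) • T))
        ((1 : ℂ) • (T * NormedSpace.exp ((s : ℂ) • T))) s :=
      HasDerivAt.scomp_of_eq s ha hb rfl
    simpa using h1'
  have h2 := ((ContinuousLinearMap.apply ℂ
      (Matrix (Fin d) (Fin d) ℂ) A).restrictScalars ℝ).hasFDerivAt.comp_hasDerivAt s h1
  exact h2

lemma trace_mul_conjTranspose_eq {d : ℕ} (X Y : Matrix (Fin d) (Fin d) ℂ) :
    (X * Yᴴ).trace = ∑ i, ∑ j, X i j * (starRingEnd ℂ) (Y i j) := by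
  simp [Matrix.trace, Matrix.diag, Matrix.mul_apply, Matrix.conjTranspose_apply,
    Complex.star_def]

lemma trace_self_eq_normSq {d : ℕ} (X : Matrix (Fin d) (Fin d) ℂ) :
    ((X * Xᴴ).trace).re = ∑ i, ∑ j, Complex.normSq (X i j) := by
  rw [trace_mul_conjTranspose_eq]
  simp [Complex.re_sum, Complex.mul_conj]

/-- Proposition 4.6 (finite-dimensional instance): if `(γ/h) ∑ⱼ [Lⱼ,Lⱼᴴ] ≤ 2M`, then the
semigroup `exp(tℒ)` generated by the Lindbladian satisfies `‖exp(tℒ)A‖ ≤ e^{Mt}‖A‖` in the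
Hilbert–Schmidt norm for all `t ≥ 0`. -/
theorem lindbladian_semigroup_bound (d J : ℕ) (hd : 1 ≤ d) (hJ : 1 ≤ J) (h γ : ℝ)
    (hh : 0 < h) (hγ : 0 ≤ γ) (P : Matrix (Fin d) (Fin d) ℂ) (hP : P.IsHermitian)
    (L : Fin J → Matrix (Fin d) (Fin d) ℂ) (M : ℝ)
    (hM : (((2 * M : ℝ) : ℂ) • (1 : Matrix (Fin d) (Fin d) ℂ)
        - ((γ / h : ℝ) : ℂ) • ∑ j, (L j * (L j)ᴴ - (L j)ᴴ * L j)).PosSemidef)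
    (𝓛 : Matrix (Fin d) (Fin d) ℂ →ₗ[ℂ] Matrix (Fin d) (Fin d) ℂ)
    (h𝓛 : ∀ A, 𝓛 A = Lindbladian h γ P L A)
    (t : ℝ) (ht : 0 ≤ t) (A : Matrix (Fin d) (Fin d) ℂ) :
    hsNorm (NormedSpace.exp ((t : ℂ) • @LinearMap.toContinuousLinearMap ℂ _ _ _ _
      PseudoMetricSpace.toUniformSpace.toTopologicalSpace _ _ _ _ _
      PseudoMetricSpace.toUniformSpace.toTopologicalSpace _ _ _ _ _ 𝓛) A)
      ≤ Real.exp (M * t) * hsNorm A := by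
  set T := @LinearMap.toContinuousLinearMap ℂ _ _ _ _
      PseudoMetricSpace.toUniformSpace.toTopologicalSpace _ _ _ _ _
      PseudoMetricSpace.toUniformSpace.toTopologicalSpace _ _ _ _ _ 𝓛 with hT
  set B : ℝ → Matrix (Fin d) (Fin d) ℂ := fun u => NormedSpace.exp ((u : ℂ) • T) A with hB_def
  have hB : ∀ s : ℝ, HasDerivAt B (Lindbladian h γ P L (B s)) s := by
    intro s
    have h1 := hasDerivAt_orbit T A s
    have h2 : T (B s) = Lindbladian h γ P L (B s) := by
      rw [hT]
      simp only [LinearMap.coe_toContinuousLinearMap']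
      exact h𝓛 (B s)
    rw [h2] at h1
    exact h1
  set g : ℝ → ℝ := fun u => ((B u * (B u)ᴴ).trace).re with hg_def
  have hg : ∀ s : ℝ, HasDerivAt g
      (2 * ((Lindbladian h γ P L (B s) * (B s)ᴴ).trace).re) s := by
    intro s
    have hent : ∀ i j : Fin d, HasDerivAt (fun u => B u i j)
        ((Lindbladian h γ P L (B s)) i j) s := by
      intro i j
      have := ((entryCLM d i j).restrictScalars ℝ).hasFDerivAt.comp_hasDerivAt s (hB s)
      exact this
    have hsum : HasDerivAt (fun u => ∑ i, ∑ j, Complex.normSq (B u i j))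
        (∑ i, ∑ j, 2 * ((Lindbladian h γ P L (B s)) i j
          * (starRingEnd ℂ) (B s i j)).re) s :=
      HasDerivAt.fun_sum fun i _ => HasDerivAt.fun_sum fun j _ => hasDerivAt_normSq (hent i j)
    have heq : g = fun u => ∑ i, ∑ j, Complex.normSq (B u i j) := by
      funext u; rw [hg_def]; exact trace_self_eq_normSq (B u)
    have hval : (2 : ℝ) * ((Lindbladian h γ P L (B s) * (B s)ᴴ).trace).re
        = ∑ i, ∑ j, 2 * ((Lindbladian h γ P L (B s)) i j * (starRingEnd ℂ) (B s i j)).re := by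
      rw [trace_mul_conjTranspose_eq, Complex.re_sum, Finset.mul_sum]
      congr 1; funext i
      rw [Complex.re_sum, Finset.mul_sum]
    rw [heq, hval]
    exact hsum
  -- the comparison function
  set φ : ℝ → ℝ := fun u => g u * Real.exp (-(2 * M) * u) with hφ_def
  have hφ : ∀ s : ℝ, HasDerivAt φ
      ((2 * ((Lindbladian h γ P L (B s) * (B s)ᴴ).trace).re) * Real.exp (-(2 * M) * s)
        + g s * (Real.exp (-(2 * M) * s) * (-(2 * M)))) s := by
    intro s
    have hexp : HasDerivAt (fun u : ℝ => Real.exp (-(2 * M) * u))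
        (Real.exp (-(2 * M) * s) * (-(2 * M))) s := by
      have h1 : HasDerivAt (fun u : ℝ => -(2 * M) * u) (-(2 * M)) s := by
        simpa using (hasDerivAt_id s).const_mul (-(2 * M))
      simpa [mul_comm] using h1.exp
    exact (hg s).mul hexp
  have hφ' : ∀ s : ℝ, deriv φ s ≤ 0 := by
    intro s
    rw [(hφ s).deriv]
    have hk := key_ineq h γ hh hγ P hP L M hM (B s)
    have hgs : g s = ((B s * (B s)ᴴ).trace).re := rfl
    have hepos : 0 < Real.exp (-(2 * M) * s) := Real.exp_pos _
    nlinarith [hk, hepos]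
  have hmono : Antitone φ :=
    antitone_of_deriv_nonpos (fun s => (hφ s).differentiableAt) hφ'
  have hφt : φ t ≤ φ 0 := hmono ht
  have hB0 : B 0 = A := by
    show NormedSpace.exp (((0:ℝ):ℂ) • T) A = A
    have h0 : ((0:ℝ):ℂ) • T = 0 := by
      rw [Complex.ofReal_zero]; exact zero_smul ℂ T
    rw [h0, NormedSpace.exp_zero, ContinuousLinearMap.one_apply]
  have hφ0 : φ 0 = g 0 := by
    rw [hφ_def]; simp
  have hg0 : g 0 = ((A * Aᴴ).trace).re := by
    show ((B 0 * (B 0)ᴴ).trace).re = ((A * Aᴴ).trace).re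
    rw [hB0]
  have hg0nn : 0 ≤ g 0 := by
    rw [hg0]
    exact psd_trace_re_nonneg (Matrix.posSemidef_self_mul_conjTranspose A)
  -- g t ≤ g 0 * exp (2 M t)
  have hgt : g t ≤ g 0 * Real.exp (2 * M * t) := by
    have h1 : g t * Real.exp (-(2 * M) * t) ≤ g 0 := by rw [← hφ0]; exact hφt
    have h2 := mul_le_mul_of_nonneg_right h1 (Real.exp_pos (2 * M * t)).le
    calc g t = g t * Real.exp (-(2 * M) * t) * Real.exp (2 * M * t) := by
          rw [mul_assoc, ← Real.exp_add]
          ring_nf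
          simp
      _ ≤ g 0 * Real.exp (2 * M * t) := h2
  have hfinal : hsNorm (B t) ≤ Real.exp (M * t) * hsNorm A := by
    have hs1 : hsNorm (B t) = Real.sqrt (g t) := rfl
    have hs2 : hsNorm A = Real.sqrt (g 0) := by rw [hg0]; rfl
    rw [hs1, hs2]
    have h3 : Real.sqrt (g t) ≤ Real.sqrt (g 0 * Real.exp (2 * M * t)) :=
      Real.sqrt_le_sqrt hgt
    have h4 : Real.sqrt (g 0 * Real.exp (2 * M * t))
        = Real.sqrt (g 0) * Real.exp (M * t) := by
      rw [Real.sqrt_mul hg0nn]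
      congr 1
      have : Real.exp (2 * M * t) = Real.exp (M * t) ^ 2 := by
        rw [sq, ← Real.exp_add]; ring_nf
      rw [this, Real.sqrt_sq (Real.exp_pos _).le]
    rw [h4] at h3
    linarith [h3]
  exact hfinal
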